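/- Let 1<p<∞ and let w be a weight on ℝ with [w]_{A_p^{+,*}} < ∞. Then for every s>1, with s' = s/(s-1), the weight w^{1/s} satisfies [w^{1/s}]_{A_p^+} ≤ 2^p · s' · [w]_{A_p^{+,*}}^{1/s}. -/

import Mathlib

open MeasureTheory Set ENNReal

/-- The weak `L^1` quasinorm `sup_{t>0} t |{x : |f(x)| > t}|` of a real function. -/
noncomputable def weakL1 (f : ℝ → ℝ) : ℝ≥0∞ :=
  ⨆ (t : ℝ) (_ : 0 < t), ENNReal.ofReal t * volume {x : ℝ | t < |f x|}

/-- The one-sided Muckenhoupt constant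
`[v]_{A_p^+} = sup_{a<b<c} ((1/(c-a))∫_a^b v) ((1/(c-a))∫_b^c v^{-1/(p-1)})^{p-1}`. -/
noncomputable def ApPlusConst (p : ℝ) (v : ℝ → ℝ) : ℝ≥0∞ :=
  ⨆ (a : ℝ) (b : ℝ) (c : ℝ) (_ : a < b) (_ : b < c),
    (ENNReal.ofReal (1 / (c - a)) * ∫⁻ y in Set.Ioo a b, ENNReal.ofReal (v y)) *
      (ENNReal.ofReal (1 / (c - a)) *
        ∫⁻ y in Set.Ioo b c, ENNReal.ofReal (v y ^ (-(1 / (p - 1))))) ^ (p - 1)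

/-- `[w]_{A_p^{+,*}} = sup_{a<b<c} (1/(c-a))^p ‖w χ_{(a,b)}‖_{L^{1,∞}}
(∫_b^c w^{-1/(p-1)})^{p-1}`. -/
noncomputable def ApStarPlusConst (p : ℝ) (w : ℝ → ℝ) : ℝ≥0∞ :=
  ⨆ (a : ℝ) (b : ℝ) (c : ℝ) (_ : a < b) (_ : b < c),
    ENNReal.ofReal (1 / (c - a)) ^ p * weakL1 (Set.indicator (Set.Ioo a b) w) *
      (∫⁻ y in Set.Ioo b c, ENNReal.ofReal (w y ^ (-(1 / (p - 1))))) ^ (p - 1)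

lemma weakL1_ge (f : ℝ → ℝ) {t : ℝ} (ht : 0 < t) :
    ENNReal.ofReal t * volume {x : ℝ | t < |f x|} ≤ weakL1 f :=
  le_iSup₂ (f := fun (t : ℝ) (_ : 0 < t) => ENNReal.ofReal t * volume {x : ℝ | t < |f x|}) t ht

lemma holder_piece {b c : ℝ} (hbc : b < c) {s : ℝ} (hs : 1 < s)
    {g : ℝ → ℝ≥0∞} (hg : AEMeasurable g (volume.restrict (Set.Ioo b c))) :
    ∫⁻ y in Set.Ioo b c, g y ^ (1 / s) ≤
      (∫⁻ y in Set.Ioo b c, g y) ^ (1 / s) * ENNReal.ofReal (c - b) ^ (1 - 1 / s) := by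
  have hs0 : (0:ℝ) < s := one_pos.trans hs
  have hpq : Real.HolderConjugate s (s / (s - 1)) := Real.HolderConjugate.conjExponent hs
  have h := ENNReal.lintegral_mul_le_Lp_mul_Lq (volume.restrict (Set.Ioo b c)) hpq
    (f := fun y => g y ^ (1/s)) (g := fun _ => 1)
    (hg.pow (aemeasurable_const (b := (1/s : ℝ)))) aemeasurable_const
  simp only [Pi.mul_apply, mul_one, ENNReal.one_rpow] at h
  have hgs : ∀ a : ℝ, ((fun y => g y ^ (1/s)) a) ^ s = g a := fun a => by
    rw [← ENNReal.rpow_mul, one_div, inv_mul_cancel₀ (ne_of_gt hs0), ENNReal.rpow_one]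
  simp_rw [hgs] at h
  rw [lintegral_one, Measure.restrict_apply_univ, Real.volume_Ioo] at h
  have hexp : 1 / (s / (s-1)) = 1 - 1/s := by
    rw [one_div_div, sub_div, div_self (ne_of_gt hs0)]
  rwa [hexp] at h

lemma kolmogorov {w : ℝ → ℝ} (hw : ∀ x, 0 ≤ w x)
    (hwm : AEMeasurable w (volume : Measure ℝ))
    {s : ℝ} (hs : 1 < s) {a b : ℝ} (hab : a < b) :
    ∫⁻ y in Set.Ioo a b, ENNReal.ofReal (w y ^ (1 / s)) ≤
      ENNReal.ofReal (s / (s - 1)) * ENNReal.ofReal (b - a) ^ (1 - 1 / s) *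
        weakL1 (Set.indicator (Set.Ioo a b) w) ^ (1 / s) := by
  have hs0 : (0 : ℝ) < s := one_pos.trans hs
  have hs1 : (0 : ℝ) < 1 / s := by positivity
  have hL : (0 : ℝ) < b - a := sub_pos.mpr hab
  set f : ℝ → ℝ := Set.indicator (Set.Ioo a b) w with hfdef
  have hf0 : ∀ x, 0 ≤ f x := fun x => Set.indicator_nonneg (fun y _ => hw y) x
  have hfm : AEMeasurable f (volume : Measure ℝ) := hwm.indicator measurableSet_Ioo
  set N : ℝ≥0∞ := weakL1 f with hNdef
  have hLHS : ∫⁻ y in Set.Ioo a b, ENNReal.ofReal (w y ^ (1 / s)) =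
      ∫⁻ t in Set.Ioi (0 : ℝ), volume {y : ℝ | t < f y ^ (1 / s)} := by
    have h1 : ∫⁻ y in Set.Ioo a b, ENNReal.ofReal (w y ^ (1 / s)) =
        ∫⁻ y, ENNReal.ofReal (f y ^ (1 / s)) := by
      rw [← lintegral_indicator measurableSet_Ioo]
      refine lintegral_congr fun y => ?_
      by_cases hy : y ∈ Set.Ioo a b
      · simp [hfdef, Set.indicator_of_mem hy]
      · simp [hfdef, Set.indicator_of_notMem hy, Real.zero_rpow (ne_of_gt hs1), Real.zero_rpow (inv_ne_zero (ne_of_gt hs0))]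
    rw [h1]
    exact lintegral_eq_lintegral_meas_lt volume
      (ae_of_all _ fun x => Real.rpow_nonneg (hf0 x) _)
      (hfm.pow (aemeasurable_const (b := (1/s : ℝ))))
  have hsets : ∀ t : ℝ, 0 < t → {y : ℝ | t < f y ^ (1 / s)} = {y : ℝ | t ^ s < f y} := by
    intro t ht
    ext y
    simp only [Set.mem_setOf_eq, one_div]
    exact Real.lt_rpow_inv_iff_of_pos ht.le (hf0 y) hs0
  have key : ∀ t : ℝ, 0 < t → volume {y : ℝ | t < f y} ≤ N * (ENNReal.ofReal t)⁻¹ := by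
    intro t ht
    have h1 : ENNReal.ofReal t * volume {x : ℝ | t < |f x|} ≤ N := weakL1_ge f ht
    have h2 : {x : ℝ | t < |f x|} = {y : ℝ | t < f y} := by
      ext x; simp [abs_of_nonneg (hf0 x)]
    rw [h2] at h1
    have ht' : ENNReal.ofReal t ≠ 0 := by simp [ht]
    calc volume {y : ℝ | t < f y}
        = ENNReal.ofReal t * volume {y : ℝ | t < f y} * (ENNReal.ofReal t)⁻¹ := by
          rw [mul_comm (ENNReal.ofReal t), mul_assoc,
            ENNReal.mul_inv_cancel ht' ENNReal.ofReal_ne_top, mul_one]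
      _ ≤ N * (ENNReal.ofReal t)⁻¹ := mul_le_mul_left h1 _
  have keyE : ∀ t : ℝ, 0 < t → volume {y : ℝ | t ^ s < f y} ≤ ENNReal.ofReal (b - a) := by
    intro t ht
    refine le_trans (measure_mono ?_) (le_of_eq Real.volume_Ioo)
    intro y hy
    by_contra hyn
    rw [Set.mem_setOf_eq, hfdef, Set.indicator_of_notMem hyn] at hy
    exact absurd hy (not_lt.mpr (Real.rpow_pos_of_pos ht s).le)
  rcases eq_or_ne N ⊤ with hNt | hNt
  · have h1 : ENNReal.ofReal (s/(s-1)) ≠ 0 := by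
      rw [Ne, ENNReal.ofReal_eq_zero, not_le]; exact div_pos hs0 (by linarith)
    have h2 : ENNReal.ofReal (b - a) ^ (1 - 1/s) ≠ 0 :=
      (ENNReal.rpow_pos (by rw [ENNReal.ofReal_pos]; exact hL) ENNReal.ofReal_ne_top).ne'
    rw [hNt, ENNReal.top_rpow_of_pos hs1, ENNReal.mul_top (mul_ne_zero h1 h2)]
    exact le_top
  rcases eq_or_ne N 0 with hN0 | hN0
  · rw [hLHS]
    have hz : ∀ t ∈ Set.Ioi (0:ℝ), volume {y : ℝ | t < f y ^ (1/s)} = 0 := by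
      intro t ht
      rw [hsets t ht]
      have := key (t ^ s) (Real.rpow_pos_of_pos ht s)
      rw [hN0, zero_mul] at this
      exact le_antisymm this zero_le
    calc ∫⁻ t in Set.Ioi (0:ℝ), volume {y : ℝ | t < f y ^ (1/s)}
        = ∫⁻ _ in Set.Ioi (0:ℝ), 0 :=
          setLIntegral_congr_fun_ae measurableSet_Ioi (ae_of_all _ hz)
      _ = 0 := by simp
      _ ≤ _ := zero_le
  -- main case
  have hNr : 0 < N.toReal := ENNReal.toReal_pos hN0 hNt
  set Nr := N.toReal with hNrdef
  set t₀ : ℝ := (Nr / (b - a)) ^ (1 / s) with ht₀def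
  have ht₀ : 0 < t₀ := Real.rpow_pos_of_pos (by positivity) _
  rw [hLHS]
  have hsplit : ∫⁻ t in Set.Ioi (0:ℝ), volume {y : ℝ | t < f y ^ (1/s)}
      = (∫⁻ t in Set.Ioc 0 t₀, volume {y : ℝ | t < f y ^ (1/s)}) +
        ∫⁻ t in Set.Ioi t₀, volume {y : ℝ | t < f y ^ (1/s)} := by
    rw [← Set.Ioc_union_Ioi_eq_Ioi ht₀.le,
      lintegral_union measurableSet_Ioi (Set.Ioc_disjoint_Ioi le_rfl)]
  have hfirst : ∫⁻ t in Set.Ioc 0 t₀, volume {y : ℝ | t < f y ^ (1/s)} ≤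
      ENNReal.ofReal (b - a) * ENNReal.ofReal t₀ := by
    calc ∫⁻ t in Set.Ioc 0 t₀, volume {y : ℝ | t < f y ^ (1/s)}
        ≤ ∫⁻ _ in Set.Ioc 0 t₀, ENNReal.ofReal (b - a) := by
          refine setLIntegral_mono' measurableSet_Ioc fun t ht => ?_
          rw [hsets t ht.1]
          exact keyE t ht.1
      _ = ENNReal.ofReal (b - a) * ENNReal.ofReal t₀ := by
          rw [setLIntegral_const, Real.volume_Ioc, sub_zero]
  have hsecond : ∫⁻ t in Set.Ioi t₀, volume {y : ℝ | t < f y ^ (1/s)} ≤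
      N * ENNReal.ofReal (t₀ ^ (1 - s) / (s - 1)) := by
    have hstep : ∀ t ∈ Set.Ioi t₀, volume {y : ℝ | t < f y ^ (1/s)} ≤
        N * ENNReal.ofReal (t ^ (-s)) := by
      intro t ht
      have htpos : 0 < t := ht₀.trans ht
      rw [hsets t htpos]
      have h := key (t ^ s) (Real.rpow_pos_of_pos htpos s)
      rwa [← ENNReal.ofReal_inv_of_pos (Real.rpow_pos_of_pos htpos s),
        ← Real.rpow_neg htpos.le] at h
    calc ∫⁻ t in Set.Ioi t₀, volume {y : ℝ | t < f y ^ (1/s)}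
        ≤ ∫⁻ t in Set.Ioi t₀, N * ENNReal.ofReal (t ^ (-s)) :=
          setLIntegral_mono' measurableSet_Ioi hstep
      _ = N * ∫⁻ t in Set.Ioi t₀, ENNReal.ofReal (t ^ (-s)) := lintegral_const_mul' _ _ hNt
      _ = N * ENNReal.ofReal (∫ t in Set.Ioi t₀, t ^ (-s)) := by
          rw [ofReal_integral_eq_lintegral_ofReal
            (integrableOn_Ioi_rpow_of_lt (by linarith) ht₀) ?_]
          filter_upwards [self_mem_ae_restrict measurableSet_Ioi] with t ht
          exact Real.rpow_nonneg (ht₀.trans ht).le _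
      _ = N * ENNReal.ofReal (t₀ ^ (1 - s) / (s - 1)) := by
          rw [integral_Ioi_rpow_of_lt (by linarith) ht₀]
          congr 1
          rw [show (-s + 1 : ℝ) = 1 - s from by ring]
          have h1 : s - 1 ≠ 0 := by linarith
          have h2 : (1 : ℝ) - s ≠ 0 := by linarith
          congr 1; rw [div_eq_div_iff h2 h1]; ring
  have hreal : (b-a) * t₀ + Nr * (t₀ ^ (1-s) / (s-1)) =
      s/(s-1) * ((b-a) ^ (1 - 1/s) * Nr ^ (1/s)) := by
    set A := Nr ^ (1/s) with hA
    set B := (b-a) ^ (1/s) with hB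
    have hA0 : 0 < A := Real.rpow_pos_of_pos hNr _
    have hB0 : 0 < B := Real.rpow_pos_of_pos hL _
    have hAs : A ^ s = Nr := by
      rw [hA, ← Real.rpow_mul hNr.le, one_div, inv_mul_cancel₀ (ne_of_gt hs0), Real.rpow_one]
    have hBs : B ^ s = (b-a) := by
      rw [hB, ← Real.rpow_mul hL.le, one_div, inv_mul_cancel₀ (ne_of_gt hs0), Real.rpow_one]
    have ht₀AB : t₀ = A / B := by rw [ht₀def, Real.div_rpow hNr.le hL.le]
    have hts : t₀ ^ (1 - s) = (A / Nr) / (B / (b-a)) := by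
      rw [ht₀AB, Real.div_rpow hA0.le hB0.le, Real.rpow_sub hA0, Real.rpow_one, hAs,
        Real.rpow_sub hB0, Real.rpow_one, hBs]
    have hL1s : (b-a) ^ (1 - 1/s) = (b-a) / B := by
      rw [Real.rpow_sub hL, Real.rpow_one, hB]
    rw [hts, ht₀AB, hL1s]
    have h1 : s - 1 ≠ 0 := by linarith
    field_simp
    ring
  calc ∫⁻ t in Set.Ioi (0:ℝ), volume {y : ℝ | t < f y ^ (1/s)}
      ≤ ENNReal.ofReal (b - a) * ENNReal.ofReal t₀ +
        N * ENNReal.ofReal (t₀ ^ (1 - s) / (s - 1)) := by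
        rw [hsplit]; exact add_le_add hfirst hsecond
    _ = ENNReal.ofReal ((b-a) * t₀ + Nr * (t₀ ^ (1-s) / (s-1))) := by
        rw [← ENNReal.ofReal_toReal hNt, ← hNrdef, ← ENNReal.ofReal_mul hL.le,
          ← ENNReal.ofReal_mul hNr.le,
          ← ENNReal.ofReal_add (by positivity)
            (mul_nonneg hNr.le (div_nonneg (Real.rpow_nonneg ht₀.le _) (by linarith)))]
    _ = ENNReal.ofReal (s/(s-1) * ((b-a) ^ (1 - 1/s) * Nr ^ (1/s))) := by rw [hreal]
    _ = ENNReal.ofReal (s/(s-1)) * ENNReal.ofReal (b - a) ^ (1 - 1/s) * N ^ (1/s) := by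
        rw [ENNReal.ofReal_mul (div_nonneg hs0.le (by linarith)),
          ENNReal.ofReal_mul (Real.rpow_nonneg hL.le _),
          ← ENNReal.ofReal_rpow_of_pos hL, ← ENNReal.ofReal_rpow_of_pos hNr,
          ENNReal.ofReal_toReal hNt, mul_assoc]

theorem stmt9 (p : ℝ) (hp : 1 < p) (w : ℝ → ℝ) (hw : ∀ x, 0 ≤ w x)
    (hwloc : LocallyIntegrable w) (hwA : ApStarPlusConst p w < ⊤)
    (s : ℝ) (hs : 1 < s) :
    ApPlusConst p (fun x => w x ^ (1 / s)) ≤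
      ENNReal.ofReal (2 ^ p * (s / (s - 1))) * (ApStarPlusConst p w) ^ (1 / s) := by
  have hwm : AEMeasurable w (volume : Measure ℝ) := hwloc.aestronglyMeasurable.aemeasurable
  have hs0 : (0:ℝ) < s := one_pos.trans hs
  have hs1 : (0:ℝ) ≤ 1/s := by positivity
  have hs1' : (0:ℝ) ≤ 1 - 1/s := by
    rw [sub_nonneg, div_le_one hs0]; exact hs.le
  have hp1 : (0:ℝ) ≤ p - 1 := by linarith
  simp only [ApPlusConst]
  refine iSup_le fun a => iSup_le fun b => iSup_le fun c =>
    iSup_le fun hab => iSup_le fun hbc => ?_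
  have hac : a < c := hab.trans hbc
  set S' : ℝ≥0∞ := ENNReal.ofReal (s/(s-1)) with hS'
  set N : ℝ≥0∞ := weakL1 (Set.indicator (Set.Ioo a b) w) with hN
  set J : ℝ≥0∞ := ∫⁻ y in Set.Ioo b c, ENNReal.ofReal (w y ^ (-(1 / (p - 1)))) with hJ
  set D : ℝ≥0∞ := ENNReal.ofReal (c - a) with hD
  have hDpos : D ≠ 0 := by rw [hD, Ne, ENNReal.ofReal_eq_zero, not_le]; linarith
  have hDtop : D ≠ ⊤ := ENNReal.ofReal_ne_top
  have hX : ENNReal.ofReal (1 / (c - a)) = D ^ (-1 : ℝ) := by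
    rw [one_div, ENNReal.ofReal_inv_of_pos (by linarith), hD, ENNReal.rpow_neg_one]
  have hI₁ : (∫⁻ y in Set.Ioo a b, ENNReal.ofReal ((fun x => w x ^ (1/s)) y)) ≤
      S' * D ^ (1 - 1/s) * N ^ (1/s) := by
    refine le_trans (kolmogorov hw hwm hs hab) ?_
    exact mul_le_mul_left (mul_le_mul_right
      (ENNReal.rpow_le_rpow (ENNReal.ofReal_le_ofReal (by linarith)) hs1') _) _
  have hI₂ : (∫⁻ y in Set.Ioo b c,
        ENNReal.ofReal ((fun x => w x ^ (1/s)) y ^ (-(1/(p-1))))) ≤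
      J ^ (1/s) * D ^ (1 - 1/s) := by
    have heq : ∀ y : ℝ, ENNReal.ofReal ((w y ^ (1/s)) ^ (-(1/(p-1)))) =
        (ENNReal.ofReal (w y ^ (-(1/(p-1))))) ^ (1/s) := by
      intro y
      rw [← Real.rpow_mul (hw y), mul_comm (1/s) (-(1/(p-1))), Real.rpow_mul (hw y)]
      exact (ENNReal.ofReal_rpow_of_nonneg (Real.rpow_nonneg (hw y) _) hs1).symm
    calc (∫⁻ y in Set.Ioo b c,
            ENNReal.ofReal ((fun x => w x ^ (1/s)) y ^ (-(1/(p-1)))))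
        = ∫⁻ y in Set.Ioo b c, (ENNReal.ofReal (w y ^ (-(1/(p-1))))) ^ (1/s) :=
          lintegral_congr fun y => heq y
      _ ≤ J ^ (1/s) * ENNReal.ofReal (c - b) ^ (1 - 1/s) :=
          holder_piece hbc hs
            ((hwm.restrict.pow (aemeasurable_const (b := (-(1/(p-1)) : ℝ)))).ennreal_ofReal)
      _ ≤ J ^ (1/s) * D ^ (1 - 1/s) :=
          mul_le_mul_right
            (ENNReal.rpow_le_rpow (ENNReal.ofReal_le_ofReal (by linarith)) hs1') _
  rw [hX]
  have hKey : D ^ (-1:ℝ) * (S' * D ^ (1 - 1/s) * N ^ (1/s)) *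
      (D ^ (-1:ℝ) * (J ^ (1/s) * D ^ (1 - 1/s))) ^ (p-1) =
      S' * ((D ^ (-1:ℝ)) ^ p * N * J ^ (p-1)) ^ (1/s) := by
    simp only [ENNReal.mul_rpow_of_nonneg _ _ hp1, ENNReal.mul_rpow_of_nonneg _ _ hs1,
      ← ENNReal.rpow_mul]
    rw [show (1/s * (p-1) : ℝ) = (p-1)*(1/s) from mul_comm _ _]
    have e1 : D ^ (-1:ℝ) * D ^ (1 - 1/s) * D ^ ((-1:ℝ)*(p-1)) * D ^ ((1-1/s)*(p-1)) =
        D ^ ((-1:ℝ)*p*(1/s)) := by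
      rw [← ENNReal.rpow_add _ _ hDpos hDtop, ← ENNReal.rpow_add _ _ hDpos hDtop,
        ← ENNReal.rpow_add _ _ hDpos hDtop]
      congr 1
      field_simp
      ring
    calc D ^ (-1:ℝ) * (S' * D ^ (1 - 1/s) * N ^ (1/s)) *
          (D ^ ((-1:ℝ)*(p-1)) * (J ^ ((p-1)*(1/s)) * D ^ ((1-1/s)*(p-1))))
        = S' * N ^ (1/s) * J ^ ((p-1)*(1/s)) *
            (D ^ (-1:ℝ) * D ^ (1 - 1/s) * D ^ ((-1:ℝ)*(p-1)) * D ^ ((1-1/s)*(p-1))) := by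
          ring
      _ = S' * N ^ (1/s) * J ^ ((p-1)*(1/s)) * D ^ ((-1:ℝ)*p*(1/s)) := by rw [e1]
      _ = S' * (D ^ ((-1:ℝ)*p*(1/s)) * N ^ (1/s) * J ^ ((p-1)*(1/s))) := by ring
  calc D ^ (-1:ℝ) * (∫⁻ y in Set.Ioo a b, ENNReal.ofReal ((fun x => w x ^ (1/s)) y)) *
        (D ^ (-1:ℝ) * ∫⁻ y in Set.Ioo b c,
          ENNReal.ofReal ((fun x => w x ^ (1/s)) y ^ (-(1/(p-1))))) ^ (p-1)
      ≤ D ^ (-1:ℝ) * (S' * D ^ (1 - 1/s) * N ^ (1/s)) *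
        (D ^ (-1:ℝ) * (J ^ (1/s) * D ^ (1 - 1/s))) ^ (p-1) :=
        mul_le_mul' (mul_le_mul_right hI₁ _)
          (ENNReal.rpow_le_rpow (mul_le_mul_right hI₂ _) hp1)
    _ = S' * ((D ^ (-1:ℝ)) ^ p * N * J ^ (p-1)) ^ (1/s) := hKey
    _ ≤ S' * (ApStarPlusConst p w) ^ (1/s) := by
        refine mul_le_mul_right (ENNReal.rpow_le_rpow ?_ hs1) _
        have hle : ENNReal.ofReal (1/(c-a)) ^ p * N * J ^ (p-1) ≤ ApStarPlusConst p w := by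
          simp only [ApStarPlusConst]
          exact le_iSup_of_le a (le_iSup_of_le b (le_iSup_of_le c
            (le_iSup_of_le hab (le_iSup_of_le hbc le_rfl))))
        rwa [hX] at hle
    _ ≤ ENNReal.ofReal (2^p * (s/(s-1))) * (ApStarPlusConst p w) ^ (1/s) := by
        refine mul_le_mul_left (ENNReal.ofReal_le_ofReal ?_) _
        have h2 : (1:ℝ) ≤ 2 ^ p := Real.one_le_rpow one_le_two (by linarith)
        have h3 : (0:ℝ) ≤ s/(s-1) := div_nonneg hs0.le (by linarith)
        nlinarith
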